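/- arXiv:1503.01447 — 3 statements merged into one kernel-verified Lean document; each statement's English description precedes it below -/
import Mathlib

section
/- Let s and r be coprime positive integers and let p ∈ ℂ[x,y] be weighted-homogeneous of degree d ≥ 1 with respect to the weights deg x = s, deg y = r, and suppose p is square-free. Then there is no prime element q of ℂ[x,y] dividing both partial derivatives ∂p/∂x and ∂p/∂y. -/
noncomputable section
set_option synthInstance.maxHeartbeats 1000000

/-- The weights: deg x = s, deg y = r (x = X 0, y = X 1). -/
def wt (s r : ℕ) : Fin 2 → ℕ := fun i => if i = 0 then s else r

open MvPolynomial

/-- `finSuccEquiv` intertwines `pderiv 0` and `Polynomial.derivative`. -/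
lemma deriv_finSuccEquiv {R : Type*} [CommRing R] (n : ℕ) (p : MvPolynomial (Fin (n + 1)) R) :
    Polynomial.derivative (finSuccEquiv R n p) = finSuccEquiv R n (pderiv 0 p) := by
  induction p using MvPolynomial.induction_on with
  | C a => simp [finSuccEquiv_apply]
  | add p q hp hq => simp [hp, hq]
  | mul_X p j hp =>
    cases j using Fin.cases with
    | zero =>
      rw [map_mul, pderiv_mul, Polynomial.derivative_mul, hp, finSuccEquiv_X_zero,
        pderiv_X_self, map_add, map_mul, map_mul, finSuccEquiv_X_zero]
      simp
    | succ j =>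
      rw [map_mul, pderiv_mul, Polynomial.derivative_mul, hp, finSuccEquiv_X_succ,
        pderiv_X_of_ne (Fin.succ_ne_zero j), map_add, map_mul, map_mul, finSuccEquiv_X_succ]
      simp

lemma finSuccEquiv_rename_succ {R : Type*} [CommRing R] (n : ℕ) (a : MvPolynomial (Fin n) R) :
    finSuccEquiv R n (rename Fin.succ a) = Polynomial.C a := by
  induction a using MvPolynomial.induction_on with
  | C c => simp [finSuccEquiv_apply]
  | add p q hp hq => simp [hp, hq]
  | mul_X p j hp => simp [hp, finSuccEquiv_X_succ]

/-- If both partial derivatives vanish, a polynomial in two variables over ℂ is constant. -/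
lemma eq_C_of_pderivs_eq_zero (f : MvPolynomial (Fin 2) ℂ)
    (h0 : pderiv 0 f = 0) (h1 : pderiv 1 f = 0) : ∃ c : ℂ, f = C c := by
  have hd : Polynomial.derivative (finSuccEquiv ℂ 1 f) = 0 := by
    rw [deriv_finSuccEquiv, h0, map_zero]
  have hF := Polynomial.eq_C_of_derivative_eq_zero hd
  set a := (finSuccEquiv ℂ 1 f).coeff 0 with ha
  have hf : f = rename Fin.succ a := by
    apply (finSuccEquiv ℂ 1).injective
    rw [finSuccEquiv_rename_succ]
    exact hF
  have h1' : pderiv 0 a = 0 := by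
    have hren := pderiv_rename (Fin.succ_injective 1) 0 a
    have : pderiv (Fin.succ 0) f = rename Fin.succ (pderiv 0 a) := by rw [hf]; exact hren
    rw [show (Fin.succ 0 : Fin 2) = 1 from rfl, h1] at this
    exact ((rename_injective _ (Fin.succ_injective 1)) (by rw [← this, map_zero])).symm
  have hd2 : Polynomial.derivative (finSuccEquiv ℂ 0 a) = 0 := by
    rw [deriv_finSuccEquiv, h1', map_zero]
  have hA := Polynomial.eq_C_of_derivative_eq_zero hd2
  set b := (finSuccEquiv ℂ 0 a).coeff 0 with hb
  have hab : a = rename Fin.succ b := by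
    apply (finSuccEquiv ℂ 0).injective
    rw [finSuccEquiv_rename_succ]
    exact hA
  obtain ⟨c, hc⟩ := MvPolynomial.C_surjective (Fin 0) b
  refine ⟨c, ?_⟩
  rw [hf, hab, ← hc, rename_C, rename_C]

/-- Key: a nonzero polynomial dividing its own `pderiv 0` has vanishing `pderiv 0`. -/
lemma pderiv_zero_of_self_dvd (f : MvPolynomial (Fin 2) ℂ)
    (h : f ∣ pderiv 0 f) : pderiv 0 f = 0 := by
  by_contra hne
  set F := finSuccEquiv ℂ 1 f with hF
  have hDne : Polynomial.derivative F ≠ 0 := by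
    rw [hF, deriv_finSuccEquiv]
    intro h0
    exact hne ((finSuccEquiv ℂ 1).injective (by rw [h0, map_zero]))
  have hdvd : F ∣ Polynomial.derivative F := by
    rw [hF, deriv_finSuccEquiv]
    obtain ⟨t, ht⟩ := h
    exact ⟨finSuccEquiv ℂ 1 t, by rw [ht, map_mul]⟩
  have h1 : F.natDegree ≤ (Polynomial.derivative F).natDegree :=
    Polynomial.natDegree_le_of_dvd hdvd hDne
  have h2 : (Polynomial.derivative F).natDegree < F.natDegree := by
    apply Polynomial.natDegree_derivative_lt
    intro h0
    exact hDne (by rw [Polynomial.eq_C_of_natDegree_eq_zero h0]; simp)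
  omega

lemma X_mul_pderiv_monomial (i : Fin 2) (m : Fin 2 →₀ ℕ) (c : ℂ) :
    X i * pderiv i (monomial m c) = monomial m (c * m i) := by
  rw [pderiv_monomial]
  rcases Nat.eq_zero_or_pos (m i) with h | h
  · simp [h]
  · rw [X, monomial_mul, one_mul,
      show Finsupp.single i 1 + (m - Finsupp.single i 1) = m from by
        rw [add_comm]; exact tsub_add_cancel_of_le (Finsupp.single_le_iff.mpr h)]

lemma weight_wt (s r : ℕ) (m : Fin 2 →₀ ℕ) :
    Finsupp.weight (wt s r) m = m 0 * s + m 1 * r := by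
  rw [Finsupp.weight_apply, Finsupp.sum_fintype]
  · simp [wt, Fin.sum_univ_two]
  · intro i; simp

lemma euler_monomial (s r d : ℕ) (m : Fin 2 →₀ ℕ) (c : ℂ)
    (hm : Finsupp.weight (wt s r) m = d) :
    C (s : ℂ) * (X 0 * pderiv 0 (monomial m c)) + C (r : ℂ) * (X 1 * pderiv 1 (monomial m c))
      = C (d : ℂ) * monomial m c := by
  rw [X_mul_pderiv_monomial, X_mul_pderiv_monomial, C_mul_monomial, C_mul_monomial,
    C_mul_monomial, ← map_add (monomial m)]
  congr 1
  rw [weight_wt] at hm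
  have h2 : ((m 0 : ℂ)) * s + (m 1 : ℂ) * r = d := by exact_mod_cast congrArg (Nat.cast (R := ℂ)) hm
  linear_combination c * h2

lemma euler_monomial' (s r d : ℕ) (m : Fin 2 →₀ ℕ) (c : ℂ)
    (hm : Finsupp.weight (wt s r) m = d) :
    C (s : ℂ) * (X 0 * pderiv 0 (monomial m c)) + C (r : ℂ) * (X 1 * pderiv 1 (monomial m c))
      = C (d : ℂ) * monomial m c := euler_monomial s r d m c hm

/-- Euler's identity for weighted-homogeneous polynomials in two variables. -/
lemma euler {s r d : ℕ} {p : MvPolynomial (Fin 2) ℂ}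
    (h : p.IsWeightedHomogeneous (wt s r) d) :
    C (s : ℂ) * (X 0 * pderiv 0 p) + C (r : ℂ) * (X 1 * pderiv 1 p) = C (d : ℂ) * p := by
  conv_lhs => rw [p.as_sum]
  conv_rhs => rw [p.as_sum]
  rw [map_sum (pderiv (0 : Fin 2)) (fun m => monomial m (coeff m p)) p.support,
    map_sum (pderiv (1 : Fin 2)) (fun m => monomial m (coeff m p)) p.support, Finset.mul_sum, Finset.mul_sum, Finset.mul_sum,
    Finset.mul_sum, ← Finset.sum_add_distrib]
  rw [Finset.mul_sum]
  refine Finset.sum_congr rfl fun m hm => ?_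
  exact euler_monomial s r d m _ (h (mem_support_iff.mp hm))

/-- if s, r are coprime positive integers and p ∈ ℂ[x,y] is
weighted-homogeneous of degree d ≥ 1 (deg x = s, deg y = r) and square-free, then no
prime element of ℂ[x,y] divides both ∂p/∂x and ∂p/∂y. -/
theorem stmt2 (s r : ℕ) (hs : 0 < s) (hr : 0 < r) (hco : Nat.Coprime s r)
    (d : ℕ) (hd : 1 ≤ d) (p : MvPolynomial (Fin 2) ℂ)
    (hhom : p.IsWeightedHomogeneous (wt s r) d) (hsf : Squarefree p) :
    ¬ ∃ q : MvPolynomial (Fin 2) ℂ, Prime q ∧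
        q ∣ MvPolynomial.pderiv (0 : Fin 2) p ∧ q ∣ MvPolynomial.pderiv (1 : Fin 2) p := by
  rintro ⟨q, hq, h0, h1⟩
  have heuler := euler hhom
  have hqp : q ∣ p := by
    have hdc : q ∣ C (d : ℂ) * p := by
      rw [← heuler]
      exact dvd_add ((h0.mul_left _).mul_left _) ((h1.mul_left _).mul_left _)
    have hu : IsUnit (C (d : ℂ) : MvPolynomial (Fin 2) ℂ) :=
      (isUnit_iff_ne_zero.mpr (Nat.cast_ne_zero.mpr (by omega : d ≠ 0))).map
        (C : ℂ →+* MvPolynomial (Fin 2) ℂ)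
    exact hu.dvd_mul_left.mp hdc
  obtain ⟨u, rfl⟩ := hqp
  have hqu : ¬ q ∣ u := by
    intro hdvd
    obtain ⟨v, rfl⟩ := hdvd
    exact hq.not_unit (hsf q ⟨v, by ring⟩)
  have key : ∀ i : Fin 2, q ∣ pderiv i (q * u) → q ∣ pderiv i q := fun i h => by
    rw [pderiv_mul] at h
    have h' : q ∣ pderiv i q * u := (dvd_add_left (Dvd.dvd.mul_right (dvd_refl q) (pderiv i u))).mp h
    exact (hq.dvd_or_dvd h').resolve_right hqu
  have e0 : pderiv 0 q = 0 := pderiv_zero_of_self_dvd q (key 0 h0)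
  have e1 : pderiv 1 q = 0 := by
    set τ := Equiv.swap (0 : Fin 2) 1 with hτ
    have hswap : pderiv 0 (rename τ q) = rename τ (pderiv 1 q) := by
      have := pderiv_rename τ.injective 1 q
      rwa [show τ 1 = 0 by simp [hτ]] at this
    have hdvd : rename τ q ∣ pderiv 0 (rename τ q) := by
      rw [hswap]
      obtain ⟨t, ht⟩ := key 1 h1
      exact ⟨rename τ t, by rw [ht, map_mul]⟩
    have := pderiv_zero_of_self_dvd _ hdvd
    rw [hswap] at this
    exact rename_injective _ τ.injective (by rw [this, map_zero])
  obtain ⟨c, rfl⟩ := eq_C_of_pderivs_eq_zero q e0 e1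
  exact hq.not_unit
    ((isUnit_iff_ne_zero.mpr fun h => hq.ne_zero (by rw [h, map_zero])).map
      (C : ℂ →+* MvPolynomial (Fin 2) ℂ))
end
end

section
/- Let R be an associative unital ring, let a, b ∈ R, and let l ≥ 0 and k ≥ 1 be integers. Then (l+k)·[a^l b, a^k] − k·[b, a^{l+k}] lies in L_3(R), the third term of the lower central series of R; that is, (l+k)[a^l b, a^k] = k[b, a^{l+k}] holds in B_2(R) = L_2(R)/L_3(R). -/
noncomputable section

/-- Lower central series of an associative ring as additive subgroups:
`lcsAdd R i` is `L_{i+1}(R)`, so `lcsAdd R 0 = L₁(R) = R` and `L_{i+2}(R)` is the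
additive subgroup generated by all `[a,u] = a*u - u*a` with `u ∈ L_{i+1}(R)`. -/
def lcsAdd (R : Type*) [Ring R] : ℕ → AddSubgroup R
  | 0 => ⊤
  | n + 1 => AddSubgroup.closure {x | ∃ a u, u ∈ lcsAdd R n ∧ x = a * u - u * a}

section Aux

variable {R : Type*} [Ring R]

lemma mem_lcs1 (x y : R) : x*y - y*x ∈ lcsAdd R 1 := by
  rw [lcsAdd]
  exact AddSubgroup.subset_closure ⟨x, y, AddSubgroup.mem_top y, rfl⟩

lemma mem_lcs2 (x v : R) (hv : v ∈ lcsAdd R 1) : x*v - v*x ∈ lcsAdd R 2 := by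
  rw [lcsAdd]
  exact AddSubgroup.subset_closure ⟨x, v, hv, rfl⟩

lemma swap_mem (a u v : R) :
    (a*(u*v) - (u*v)*a) - (a*(v*u) - (v*u)*a) ∈ lcsAdd R 2 := by
  have h := mem_lcs2 a (u*v - v*u) (mem_lcs1 u v)
  have he : (a*(u*v) - (u*v)*a) - (a*(v*u) - (v*u)*a)
      = a*(u*v - v*u) - (u*v - v*u)*a := by noncomm_ring
  rwa [he]

/-- Key lemma: modulo `L₃`, `[a^(m+1), c] ≡ (m+1) • [a, c * a^m]`. -/
lemma keyL (a c : R) (m : ℕ) :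
    (a^(m+1)*c - c*a^(m+1)) - (m+1) • (a*(c*a^m) - (c*a^m)*a) ∈ lcsAdd R 2 := by
  induction m generalizing c with
  | zero => simpa using (lcsAdd R 2).zero_mem
  | succ n ih =>
    have h1 := swap_mem a (a^(n+1)) c
    have h2 := ih (c*a)
    have he : (a^(n+1+1)*c - c*a^(n+1+1)) - (n+1+1) • (a*(c*a^(n+1)) - (c*a^(n+1))*a)
        = ((a*(a^(n+1)*c) - (a^(n+1)*c)*a) - (a*(c*a^(n+1)) - (c*a^(n+1))*a))
          + ((a^(n+1)*(c*a) - (c*a)*a^(n+1)) - (n+1) • (a*((c*a)*a^n) - ((c*a)*a^n)*a)) := by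
      simp only [pow_succ', succ_nsmul, mul_assoc, pow_mul_comm']
      abel
    rw [he]
    exact add_mem h1 h2

lemma pp1 (a x : R) (i j : ℕ) : a^i*(a^j*x) = a^(i+j)*x := by rw [← mul_assoc, ← pow_add]
lemma pp2 (a x : R) (j : ℕ) : a*(a^j*x) = a^(j+1)*x := by rw [← mul_assoc, ← pow_succ']
lemma pp3 (a x : R) (i : ℕ) : a^i*(a*x) = a^(i+1)*x := by rw [← mul_assoc, ← pow_succ]
lemma pp4 (a : R) (i j : ℕ) : a^i*a^j = a^(i+j) := (pow_add a i j).symm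
lemma pp5 (a : R) (j : ℕ) : a*a^j = a^(j+1) := (pow_succ' a j).symm
lemma pp6 (a : R) (i : ℕ) : a^i*a = a^(i+1) := (pow_succ a i).symm

end Aux

/-- in any associative unital ring R, for a, b ∈ R and integers l ≥ 0,
k ≥ 1, the element (l+k)·[aˡb, aᵏ] − k·[b, a^{l+k}] lies in L₃(R); that is,
(l+k)[aˡb, aᵏ] = k[b, a^{l+k}] in B₂(R) = L₂(R)/L₃(R). -/
theorem stmt10 {R : Type*} [Ring R] (a b : R) (l k : ℕ) (hk : 1 ≤ k) :
    (l + k) • ((a ^ l * b) * a ^ k - a ^ k * (a ^ l * b))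
      - k • (b * a ^ (l + k) - a ^ (l + k) * b) ∈ lcsAdd R 2 := by
  cases l with
  | zero =>
    simpa using (lcsAdd R 2).zero_mem
  | succ l' =>
    have h1 := keyL a (b*a^k) l'
    have h2 := keyL a b (l'+k)
    have he : (l' + 1 + k) • ((a ^ (l'+1) * b) * a ^ k - a ^ k * (a ^ (l'+1) * b))
          - k • (b * a ^ (l'+1+k) - a ^ (l'+1+k) * b)
        = (l'+1+k) • ((a^(l'+1)*(b*a^k) - (b*a^k)*a^(l'+1))
              - (l'+1) • (a*((b*a^k)*a^l') - ((b*a^k)*a^l')*a))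
          - (l'+1) • ((a^(l'+k+1)*b - b*a^(l'+k+1))
              - (l'+k+1) • (a*(b*a^(l'+k)) - (b*a^(l'+k))*a)) := by
      simp only [smul_sub, smul_smul, mul_assoc, pp1, pp2, pp3, pp4, pp5, pp6,
        Nat.add_comm, Nat.add_left_comm, Nat.add_assoc, Nat.mul_comm]
      module
    rw [he]
    exact sub_mem (nsmul_mem h1 _) (nsmul_mem h2 _)
end
end

section
/- Let s and r be coprime positive integers, let n ≥ 1 be an integer, and let a_0, …, a_n ∈ ℂ with a_0 ≠ 0 and a_n ≠ 0. If the polynomial Q = Σ_{k=0}^{n} a_k x^{(n−k)r} y^{ks} is square-free in ℂ[x,y], then the one-variable polynomial Σ_{k=0}^{n} a_k x^{n−k} is square-free in ℂ[x]. -/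
noncomputable section

open Polynomial LaurentPolynomial

/-- Weighted homogenization-substitution of a one-variable polynomial, in ℂ[x][y]. -/
def Dp (r s m : ℕ) (f : Polynomial ℂ) : Polynomial (Polynomial ℂ) :=
  ∑ i ∈ Finset.range (m + 1),
    Polynomial.C (Polynomial.C (f.coeff i) * Polynomial.X ^ (i * r)) * Polynomial.X ^ ((m - i) * s)

/-- The substitution X ↦ x^r T^{-s} into the Laurent ring ℂ[x][T,T⁻¹]. -/
def Φp (r s : ℕ) : Polynomial ℂ →+* LaurentPolynomial (Polynomial ℂ) :=
  Polynomial.eval₂RingHom (LaurentPolynomial.C.comp Polynomial.C)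
    (LaurentPolynomial.C (Polynomial.X ^ r) * LaurentPolynomial.T (-(s : ℤ)))

lemma lemA (r s m : ℕ) (f : Polynomial ℂ) (hf : f.natDegree ≤ m) :
    Polynomial.toLaurent (Dp r s m f) = LaurentPolynomial.T ((m * s : ℕ) : ℤ) * Φp r s f := by
  have h1 : f.natDegree < m + 1 := Nat.lt_succ_of_le hf
  rw [Φp, Polynomial.coe_eval₂RingHom, Polynomial.eval₂_eq_sum_range' _ h1, Dp, map_sum,
    Finset.mul_sum]
  refine Finset.sum_congr rfl fun i hi => ?_
  have him : i ≤ m := Nat.lt_succ_iff.mp (Finset.mem_range.mp hi)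
  rw [Polynomial.toLaurent_C_mul_X_pow, mul_pow, ← map_pow, ← pow_mul,
    LaurentPolynomial.T_pow, RingHom.comp_apply, map_mul]
  have hT : (LaurentPolynomial.T (((m - i) * s : ℕ) : ℤ) : LaurentPolynomial (Polynomial ℂ))
      = LaurentPolynomial.T ((m * s : ℕ) : ℤ) * LaurentPolynomial.T ((i : ℤ) * -(s : ℤ)) := by
    rw [← LaurentPolynomial.T_add]
    congr 1
    have h2 : i * s ≤ m * s := Nat.mul_le_mul_right s him
    rw [Nat.sub_mul, Nat.cast_sub h2]
    push_cast
    ring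
  rw [hT, mul_comm i r]
  ring

lemma lemB (r s M N : ℕ) (f g : Polynomial ℂ) (hf : f.natDegree ≤ M) (hg : g.natDegree ≤ N) :
    Dp r s (M + N) (f * g) = Dp r s M f * Dp r s N g := by
  apply Polynomial.toLaurent_injective
  rw [map_mul, lemA _ _ _ _ (le_trans (Polynomial.natDegree_mul_le) (add_le_add hf hg)),
    lemA _ _ _ _ hf, lemA _ _ _ _ hg, map_mul,
    show (((M + N) * s : ℕ) : ℤ) = ((M * s : ℕ) : ℤ) + ((N * s : ℕ) : ℤ) by push_cast; ring,
    LaurentPolynomial.T_add]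
  ring

/-- The algebra equivalence ℂ[x,y] ≃ ℂ[x][y], with X 0 ↦ C X, X 1 ↦ X. -/
def e2 : MvPolynomial (Fin 2) ℂ ≃ₐ[ℂ] Polynomial (Polynomial ℂ) :=
  (MvPolynomial.renameEquiv ℂ (Equiv.swap (0 : Fin 2) 1)).trans
    ((MvPolynomial.finSuccEquiv ℂ 1).trans
      (Polynomial.mapAlgEquiv ((MvPolynomial.finSuccEquiv ℂ 0).trans
        (Polynomial.mapAlgEquiv (MvPolynomial.isEmptyAlgEquiv ℂ (Fin 0))))))

def v2 : Fin 2 → Polynomial (Polynomial ℂ) := ![Polynomial.C Polynomial.X, Polynomial.X]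

lemma e2_apply (p : MvPolynomial (Fin 2) ℂ) : e2 p = MvPolynomial.aeval v2 p := by
  have h : e2.toAlgHom = MvPolynomial.aeval v2 := by
    apply MvPolynomial.algHom_ext
    intro i
    fin_cases i
    · show e2 (MvPolynomial.X 0) = _
      have h01 : (Equiv.swap (0 : Fin 2) 1) 0 = (0 : Fin 1).succ := Equiv.swap_apply_left 0 1
      rw [MvPolynomial.aeval_X]
      simp only [e2, AlgEquiv.trans_apply, MvPolynomial.renameEquiv_apply,
        MvPolynomial.rename_X, h01, MvPolynomial.finSuccEquiv_X_succ,
        Polynomial.coe_mapAlgEquiv, Polynomial.map_C, MvPolynomial.finSuccEquiv_X_zero,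
        Polynomial.map_X]
      simp [v2, AlgEquiv.trans_apply, MvPolynomial.finSuccEquiv_X_zero]
    · show e2 (MvPolynomial.X 1) = _
      have h10 : (Equiv.swap (0 : Fin 2) 1) 1 = 0 := Equiv.swap_apply_right 0 1
      rw [MvPolynomial.aeval_X]
      simp only [e2, AlgEquiv.trans_apply, MvPolynomial.renameEquiv_apply,
        MvPolynomial.rename_X, h10, MvPolynomial.finSuccEquiv_X_zero,
        Polynomial.coe_mapAlgEquiv, Polynomial.map_X]
      simp [v2]
  exact DFunLike.congr_fun h p

/-- let s, r be coprime positive integers, n ≥ 1, and a_0, …, a_n ∈ ℂ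
with a_0 ≠ 0 and a_n ≠ 0. If Q = Σ_{k=0}^{n} a_k x^{(n−k)r} y^{ks} is square-free in
ℂ[x,y], then Σ_{k=0}^{n} a_k x^{n−k} is square-free in ℂ[x]. -/
theorem stmt14 (s r : ℕ) (hs : 0 < s) (hr : 0 < r) (hco : Nat.Coprime s r)
    (n : ℕ) (hn : 1 ≤ n) (a : ℕ → ℂ) (ha0 : a 0 ≠ 0) (han : a n ≠ 0)
    (hQ : Squarefree (∑ k ∈ Finset.range (n + 1),
      MvPolynomial.C (a k) * MvPolynomial.X (0 : Fin 2) ^ ((n - k) * r)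
        * MvPolynomial.X (1 : Fin 2) ^ (k * s))) :
    Squarefree (∑ k ∈ Finset.range (n + 1), Polynomial.C (a k) * Polynomial.X ^ (n - k)) := by
  set Q : MvPolynomial (Fin 2) ℂ := ∑ k ∈ Finset.range (n + 1),
      MvPolynomial.C (a k) * MvPolynomial.X (0 : Fin 2) ^ ((n - k) * r)
        * MvPolynomial.X (1 : Fin 2) ^ (k * s) with hQdef
  set P : Polynomial ℂ := ∑ k ∈ Finset.range (n + 1), Polynomial.C (a k) * Polynomial.X ^ (n - k)
    with hPdef
  intro c hc
  by_contra hcu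
  -- coefficients of P
  have hPc : ∀ j ≤ n, P.coeff (n - j) = a j := by
    intro j hj
    rw [hPdef, Polynomial.finset_sum_coeff]
    rw [Finset.sum_eq_single j]
    · simp [Polynomial.coeff_C_mul, Polynomial.coeff_X_pow]
    · intro k hk hkj
      have hk' : k ≤ n := Nat.lt_succ_iff.mp (Finset.mem_range.mp hk)
      have hne : n - j ≠ n - k := by omega
      simp [Polynomial.coeff_C_mul, Polynomial.coeff_X_pow, hne]
    · intro h; exact absurd (Finset.mem_range.mpr (Nat.lt_succ_of_le hj)) h
  have h00 : P.coeff n = a 0 := by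
    have := hPc 0 (Nat.zero_le n); simpa using this
  have hP0 : P ≠ 0 := fun h => ha0 (by rw [← h00, h, Polynomial.coeff_zero])
  have hdegle : P.natDegree ≤ n := by
    refine Polynomial.natDegree_sum_le_of_forall_le _ _ fun k hk => ?_
    exact le_trans (Polynomial.natDegree_C_mul_X_pow_le _ _) (Nat.sub_le n k)
  have hdegP : P.natDegree = n :=
    le_antisymm hdegle (Polynomial.le_natDegree_of_ne_zero (by rw [h00]; exact ha0))
  have hc0 : c ≠ 0 := by
    rintro rfl
    exact hP0 (zero_dvd_iff.mp (by simpa using hc))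
  obtain ⟨d, hd⟩ := hc
  have hd0 : d ≠ 0 := by
    rintro rfl
    rw [mul_zero] at hd
    exact hP0 hd
  set m := c.natDegree with hm
  set N := d.natDegree with hN
  have hmn : n = m + (m + N) := by
    have h := hdegP
    rw [hd, Polynomial.natDegree_mul (mul_ne_zero hc0 hc0) hd0,
      Polynomial.natDegree_mul hc0 hc0] at h
    omega
  have hm1 : 1 ≤ m := by
    by_contra h
    have hm0 : m = 0 := by omega
    obtain ⟨x, hx⟩ := Polynomial.natDegree_eq_zero.mp hm0
    have hx0 : x ≠ 0 := by rintro rfl; simp at hx; exact hc0 hx.symm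
    exact hcu (hx ▸ (Polynomial.isUnit_C.mpr (isUnit_iff_ne_zero.mpr hx0)))
  -- multiplicativity
  have hcd : (c * d).natDegree = m + N := Polynomial.natDegree_mul hc0 hd0
  have hB : Dp r s n P = Dp r s m c * (Dp r s m c * Dp r s N d) := by
    have e1 : Dp r s (m + (m + N)) (c * (c * d)) = Dp r s m c * Dp r s (m + N) (c * d) :=
      lemB r s m (m + N) c (c * d) le_rfl hcd.le
    have e2' : Dp r s (m + N) (c * d) = Dp r s m c * Dp r s N d :=
      lemB r s m N c d le_rfl le_rfl
    rw [hmn, hd, mul_assoc, e1, e2']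
  -- identify e2 Q with Dp r s n P
  have hDp : Dp r s n P = ∑ k ∈ Finset.range (n + 1),
      Polynomial.C (Polynomial.C (a k) * Polynomial.X ^ ((n - k) * r))
        * Polynomial.X ^ (k * s) := by
    rw [Dp, ← Finset.sum_range_reflect]
    refine Finset.sum_congr rfl fun j hj => ?_
    have hj' : j ≤ n := Nat.lt_succ_iff.mp (Finset.mem_range.mp hj)
    rw [show n + 1 - 1 - j = n - j by omega, hPc j hj', Nat.sub_sub_self hj']
  have heQ : e2 Q = Dp r s n P := by
    rw [e2_apply, hQdef, map_sum, hDp]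
    refine Finset.sum_congr rfl fun k hk => ?_
    simp only [map_mul, map_pow, MvPolynomial.aeval_X, MvPolynomial.aeval_C, v2,
      Matrix.cons_val_zero, Matrix.cons_val_one, Matrix.head_cons]
    rw [← Polynomial.C_pow, ← Polynomial.C_mul]
    norm_num [Polynomial.algebraMap_apply]
  -- unit chase
  have hdvd : e2.symm (Dp r s m c) * e2.symm (Dp r s m c) ∣ Q := by
    refine ⟨e2.symm (Dp r s N d), ?_⟩
    rw [← map_mul, ← map_mul, mul_assoc, ← hB, ← heQ, AlgEquiv.symm_apply_apply]
  have hu : IsUnit (Dp r s m c) := by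
    have h := (hQ _ hdvd).map e2
    rwa [AlgEquiv.apply_symm_apply] at h
  have hu2 : IsUnit (Polynomial.eval (1 : Polynomial ℂ) (Dp r s m c)) :=
    hu.map (Polynomial.evalRingHom (1 : Polynomial ℂ))
  have hE : Polynomial.eval (1 : Polynomial ℂ) (Dp r s m c)
      = ∑ i ∈ Finset.range (m + 1), Polynomial.C (c.coeff i) * Polynomial.X ^ (i * r) := by
    rw [Dp, Polynomial.eval_finset_sum]
    simp
  have hcoeffE : (∑ i ∈ Finset.range (m + 1),
      Polynomial.C (c.coeff i) * Polynomial.X ^ (i * r)).coeff (m * r) = c.coeff m := by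
    rw [Polynomial.finset_sum_coeff, Finset.sum_eq_single m]
    · simp [Polynomial.coeff_C_mul, Polynomial.coeff_X_pow]
    · intro k hk hkm
      have hne : m * r ≠ k * r := fun h => hkm (Nat.eq_of_mul_eq_mul_right hr h).symm
      simp [Polynomial.coeff_C_mul, Polynomial.coeff_X_pow, hne]
    · intro h; exact absurd (Finset.self_mem_range_succ m) h
  have hcm : c.coeff m ≠ 0 := by
    rw [hm]; exact Polynomial.leadingCoeff_ne_zero.mpr hc0
  have hdegE : m * r ≤ (∑ i ∈ Finset.range (m + 1),
      Polynomial.C (c.coeff i) * Polynomial.X ^ (i * r)).natDegree :=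
    Polynomial.le_natDegree_of_ne_zero (hcoeffE ▸ hcm)
  have h0 : (∑ i ∈ Finset.range (m + 1),
      Polynomial.C (c.coeff i) * Polynomial.X ^ (i * r)).natDegree = 0 := by
    rw [← hE]
    exact Polynomial.natDegree_eq_zero_of_isUnit hu2
  rw [h0] at hdegE
  have hmr : 1 ≤ m * r := Nat.one_le_iff_ne_zero.mpr (by positivity)
  omega
end
end
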